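/- Let A be a line arrangement in ℝ² with |A| = n lines, and let ν(A) = min{ max{m(A)−1, p(A)}, min{n − m(A) + 1, n − p(A)} }. If 0 < d < ν(A), then there is no polynomial vector field of degree exactly d fixing every line of A (i.e., D_d(A) = ∅). -/

import Mathlib

open MvPolynomial

/-- Evaluation of a bivariate polynomial at a point of `ℝ × ℝ`
(the variable `X 0` is `x`, the variable `X 1` is `y`). -/
noncomputable def pev (P : MvPolynomial (Fin 2) ℝ) (q : ℝ × ℝ) : ℝ :=
  MvPolynomial.eval ![q.1, q.2] P

/-- The line `{(x, y) | a * x + b * y + c = 0}`. -/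
def lineSet (a b c : ℝ) : Set (ℝ × ℝ) := {q : ℝ × ℝ | a * q.1 + b * q.2 + c = 0}

/-- A subset of `ℝ²` is a line if it is the zero set of an affine form
`a * x + b * y + c` with `(a, b) ≠ (0, 0)`. -/
def IsLine (L : Set (ℝ × ℝ)) : Prop :=
  ∃ a b c : ℝ, (a, b) ≠ (0, 0) ∧ L = lineSet a b c

/-- The line `L` is invariant by the polynomial vector field `χ = P ∂x + Q ∂y`:
for a defining affine form `a * x + b * y + c` of `L`, the polynomial
`a * P + b * Q` vanishes at every point of `L`. -/
def InvLine (P Q : MvPolynomial (Fin 2) ℝ) (L : Set (ℝ × ℝ)) : Prop :=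
  ∃ a b c : ℝ, (a, b) ≠ (0, 0) ∧ L = lineSet a b c ∧
    ∀ q ∈ L, a * pev P q + b * pev Q q = 0

open scoped Classical in
/-- The number of lines of the arrangement `A` passing through the point `q`. -/
noncomputable def numThrough (A : Finset (Set (ℝ × ℝ))) (q : ℝ × ℝ) : ℕ :=
  (A.filter (fun L => q ∈ L)).card

/-- `mArr A` is the maximal number of lines of `A` passing through a common point. -/
noncomputable def mArr (A : Finset (Set (ℝ × ℝ))) : ℕ :=
  sSup (Set.range (numThrough A))

/-- Two lines are parallel if they are equal or disjoint. -/
def ParLines (L L' : Set (ℝ × ℝ)) : Prop := L = L' ∨ L ∩ L' = ∅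

/-- `pArr A` is the maximal number of pairwise parallel lines in `A`. -/
noncomputable def pArr (A : Finset (Set (ℝ × ℝ))) : ℕ :=
  sSup {k : ℕ | ∃ S : Finset (Set (ℝ × ℝ)), S ⊆ A ∧
    (∀ L ∈ S, ∀ L' ∈ S, ParLines L L') ∧ S.card = k}





noncomputable def lform (a b c : ℝ) : MvPolynomial (Fin 2) ℝ :=
  C a * X 0 + C b * X 1 + C c

lemma eval_aeval_mv (g : Fin 2 → MvPolynomial (Fin 2) ℝ) (v : Fin 2 → ℝ)
    (f : MvPolynomial (Fin 2) ℝ) :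
    eval v (aeval g f) = eval (fun i => eval v (g i)) f := by
  induction f using MvPolynomial.induction_on with
  | C a => simp [MvPolynomial.algebraMap_eq]
  | add p q hp hq => simp only [map_add, hp, hq]
  | mul_X p n hp => simp only [map_mul, aeval_X, eval_X, hp]

lemma eval_aeval_poly (g : Fin 2 → Polynomial ℝ) (t : ℝ)
    (f : MvPolynomial (Fin 2) ℝ) :
    Polynomial.eval t (aeval g f) = eval (fun i => Polynomial.eval t (g i)) f := by
  induction f using MvPolynomial.induction_on with
  | C a => simp [MvPolynomial.algebraMap_eq]
  | add p q hp hq => simp only [map_add, Polynomial.eval_add, hp, hq]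
  | mul_X p n hp => simp only [map_mul, aeval_X, Polynomial.eval_mul, eval_X, hp]

lemma pev_eq (f : MvPolynomial (Fin 2) ℝ) (q : ℝ × ℝ) :
    pev f q = eval ![q.1, q.2] f := rfl

lemma pev_lform (a b c : ℝ) (q : ℝ × ℝ) :
    pev (lform a b c) q = a * q.1 + b * q.2 + c := by
  simp [pev, lform]

lemma ab_ne (a b : ℝ) (hab : (a, b) ≠ ((0 : ℝ), (0 : ℝ))) : a ≠ 0 ∨ b ≠ 0 := by
  by_contra h
  push_neg at h
  exact hab (by simp [h.1, h.2])

lemma e_pos (a b : ℝ) (hab : (a, b) ≠ ((0 : ℝ), (0 : ℝ))) : 0 < a ^ 2 + b ^ 2 := by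
  rcases ab_ne a b hab with h | h <;> positivity

lemma line_point (a b c : ℝ) (hab : (a, b) ≠ ((0 : ℝ), (0 : ℝ))) :
    ∃ p : ℝ × ℝ, p ∈ lineSet a b c := by
  have he := (e_pos a b hab).ne'
  refine ⟨(-a * c / (a ^ 2 + b ^ 2), -b * c / (a ^ 2 + b ^ 2)), ?_⟩
  simp only [lineSet, Set.mem_setOf_eq]
  field_simp
  ring

lemma param_mem (a b c p₁ p₂ t : ℝ) (hp : a * p₁ + b * p₂ + c = 0) :
    (p₁ + b * t, p₂ - a * t) ∈ lineSet a b c := by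
  simp only [lineSet, Set.mem_setOf_eq]
  linear_combination hp

lemma param_surj (a b c p₁ p₂ : ℝ) (hab : (a, b) ≠ ((0 : ℝ), (0 : ℝ)))
    (hp : a * p₁ + b * p₂ + c = 0) {q : ℝ × ℝ} (hq : q ∈ lineSet a b c) :
    ∃ t : ℝ, q = (p₁ + b * t, p₂ - a * t) := by
  have he := (e_pos a b hab).ne'
  simp only [lineSet, Set.mem_setOf_eq] at hq
  refine ⟨(b * (q.1 - p₁) - a * (q.2 - p₂)) / (a ^ 2 + b ^ 2), ?_⟩
  rw [Prod.ext_iff]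
  constructor
  · show q.1 = _
    field_simp
    linear_combination a * hq - a * hp
  · show q.2 = _
    field_simp
    linear_combination b * hq - b * hp

lemma inter_of_det_ne (a b c a' b' c' : ℝ) (h : a * b' - a' * b ≠ 0) :
    ∃ q : ℝ × ℝ, q ∈ lineSet a b c ∧ q ∈ lineSet a' b' c' := by
  refine ⟨((-c * b' + c' * b) / (a * b' - a' * b), (-a * c' + a' * c) / (a * b' - a' * b)), ?_, ?_⟩ <;>
  · simp only [lineSet, Set.mem_setOf_eq]
    rw [mul_div_assoc', mul_div_assoc', ← add_div, div_add' _ _ _ h, div_eq_zero_iff]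
    left
    ring

lemma prop_of_det (a b a' b' : ℝ) (hab : (a, b) ≠ ((0 : ℝ), (0 : ℝ)))
    (hab' : (a', b') ≠ ((0 : ℝ), (0 : ℝ))) (hdet : a * b' - a' * b = 0) :
    ∃ l : ℝ, l ≠ 0 ∧ a' = l * a ∧ b' = l * b := by
  rcases ab_ne a b hab with h | h
  · have hb' : b' = a' / a * b := by field_simp; linear_combination hdet
    have ha'0 : a' ≠ 0 := by
      intro h0
      apply hab'
      rw [h0] at hb'
      simp only [zero_div, zero_mul] at hb'
      simp [h0, hb']
    exact ⟨a' / a, div_ne_zero ha'0 h, by field_simp, hb'⟩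
  · have ha' : a' = b' / b * a := by field_simp; linear_combination -hdet
    have hb'0 : b' ≠ 0 := by
      intro h0
      apply hab'
      rw [h0] at ha'
      simp only [zero_div, zero_mul] at ha'
      simp [h0, ha']
    exact ⟨b' / b, div_ne_zero hb'0 h, ha', by field_simp⟩

lemma lines_eq_of_det (a b c a' b' c' : ℝ) (hab : (a, b) ≠ ((0 : ℝ), (0 : ℝ)))
    (hab' : (a', b') ≠ ((0 : ℝ), (0 : ℝ))) (hdet : a * b' - a' * b = 0)
    {q : ℝ × ℝ} (hq : q ∈ lineSet a b c) (hq' : q ∈ lineSet a' b' c') :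
    lineSet a b c = lineSet a' b' c' := by
  obtain ⟨l, hl, ha', hb'⟩ := prop_of_det a b a' b' hab hab' hdet
  have h1 := hq; have h2 := hq'
  simp only [lineSet, Set.mem_setOf_eq] at h1 h2
  have hc' : c' = l * c := by
    rw [ha', hb'] at h2
    linear_combination h2 - l * h1
  ext r
  simp only [lineSet, Set.mem_setOf_eq, ha', hb', hc']
  constructor
  · intro h; linear_combination l * h
  · intro h
    have h3 : l * (a * r.1 + b * r.2 + c) = 0 := by linear_combination h
    rcases mul_eq_zero.mp h3 with h4 | h4
    · exact absurd h4 hl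
    · exact h4

lemma det_of_par (a b c a' b' c' : ℝ) (hab : (a, b) ≠ ((0 : ℝ), (0 : ℝ)))
    (hab' : (a', b') ≠ ((0 : ℝ), (0 : ℝ)))
    (hpar : ParLines (lineSet a b c) (lineSet a' b' c')) : a * b' - a' * b = 0 := by
  rcases hpar with heq | hdisj
  · obtain ⟨p, hp⟩ := line_point a b c hab
    have hp0 : a * p.1 + b * p.2 + c = 0 := hp
    have hp1 : (p.1 + b * 1, p.2 - a * 1) ∈ lineSet a b c := param_mem a b c p.1 p.2 1 hp0
    have h1 : a' * p.1 + b' * p.2 + c' = 0 := by rw [heq] at hp; exact hp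
    have h2 : a' * (p.1 + b * 1) + b' * (p.2 - a * 1) + c' = 0 := by
      rw [heq] at hp1; exact hp1
    linear_combination h1 - h2
  · by_contra h
    obtain ⟨q, hq, hq'⟩ := inter_of_det_ne a b c a' b' c' h
    have : q ∈ lineSet a b c ∩ lineSet a' b' c' := ⟨hq, hq'⟩
    rw [hdisj] at this
    exact this

lemma par_of_det (a b c a' b' c' : ℝ) (hab : (a, b) ≠ ((0 : ℝ), (0 : ℝ)))
    (hab' : (a', b') ≠ ((0 : ℝ), (0 : ℝ))) (hdet : a * b' - a' * b = 0) :
    ParLines (lineSet a b c) (lineSet a' b' c') := by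
  by_cases h : ∃ q, q ∈ lineSet a b c ∧ q ∈ lineSet a' b' c'
  · obtain ⟨q, hq, hq'⟩ := h
    exact Or.inl (lines_eq_of_det a b c a' b' c' hab hab' hdet hq hq')
  · right
    push_neg at h
    ext q
    simp only [Set.mem_inter_iff, Set.mem_empty_iff_false, iff_false]
    rintro ⟨hq, hq'⟩
    exact h q hq hq'

lemma line_inter_sub (a b c a' b' c' : ℝ) (hab : (a, b) ≠ ((0 : ℝ), (0 : ℝ)))
    (hab' : (a', b') ≠ ((0 : ℝ), (0 : ℝ)))
    (hne : lineSet a b c ≠ lineSet a' b' c') :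
    Set.Subsingleton (lineSet a b c ∩ lineSet a' b' c') := by
  intro q ⟨hq, hq'⟩ r ⟨hr, hr'⟩
  by_contra hqr
  have hu : q.1 - r.1 ≠ 0 ∨ q.2 - r.2 ≠ 0 := by
    by_contra hc
    push_neg at hc
    exact hqr (Prod.ext (by linarith [hc.1]) (by linarith [hc.2]))
  have e1 : a * q.1 + b * q.2 + c = 0 := hq
  have e2 : a * r.1 + b * r.2 + c = 0 := hr
  have e3 : a' * q.1 + b' * q.2 + c' = 0 := hq'
  have e4 : a' * r.1 + b' * r.2 + c' = 0 := hr'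
  have h1 : a * (q.1 - r.1) + b * (q.2 - r.2) = 0 := by linear_combination e1 - e2
  have h2 : a' * (q.1 - r.1) + b' * (q.2 - r.2) = 0 := by linear_combination e3 - e4
  have hdet : a * b' - a' * b = 0 := by
    rcases hu with h | h
    · have h3 : (a * b' - a' * b) * (q.1 - r.1) = 0 := by
        linear_combination b' * h1 - b * h2
      rcases mul_eq_zero.mp h3 with h4 | h4
      · exact h4
      · exact absurd h4 h
    · have h3 : (a * b' - a' * b) * (q.2 - r.2) = 0 := by
        linear_combination a * h2 - a' * h1
      rcases mul_eq_zero.mp h3 with h4 | h4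
      · exact h4
      · exact absurd h4 h
  exact hne (lines_eq_of_det a b c a' b' c' hab hab' hdet hq hq')

/-- affine substitution -/
noncomputable def affmap (r s t r' s' t' : ℝ) :
    MvPolynomial (Fin 2) ℝ →ₐ[ℝ] MvPolynomial (Fin 2) ℝ :=
  aeval ![C r + C s * X 0 + C t * X 1, C r' + C s' * X 0 + C t' * X 1]

lemma eval_affmap (r s t r' s' t' : ℝ) (v : Fin 2 → ℝ) (f : MvPolynomial (Fin 2) ℝ) :
    eval v (affmap r s t r' s' t' f)
      = eval ![r + s * v 0 + t * v 1, r' + s' * v 0 + t' * v 1] f := by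
  rw [affmap, eval_aeval_mv]
  have hfun : (fun i => eval v (![C r + C s * X 0 + C t * X 1,
      C r' + C s' * X 0 + C t' * X 1] i))
      = ![r + s * v 0 + t * v 1, r' + s' * v 0 + t' * v 1] := by
    funext i
    fin_cases i <;> simp
  rw [hfun]

lemma deg_aeval_le (g : Fin 2 → MvPolynomial (Fin 2) ℝ) (hg : ∀ i, (g i).totalDegree ≤ 1)
    (f : MvPolynomial (Fin 2) ℝ) : (aeval g f).totalDegree ≤ f.totalDegree := by
  rw [aeval_def, eval₂_eq]
  apply totalDegree_finsetSum_le
  intro m hm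
  refine le_trans (totalDegree_mul _ _) ?_
  have h1 : (algebraMap ℝ (MvPolynomial (Fin 2) ℝ) (coeff m f)).totalDegree = 0 := by
    rw [MvPolynomial.algebraMap_eq]; exact totalDegree_C _
  rw [h1, zero_add]
  refine le_trans (totalDegree_finset_prod _ _) ?_
  refine le_trans (Finset.sum_le_sum (fun i _ => le_trans (totalDegree_pow _ _)
    (by exact Nat.mul_le_mul_left (m i) (hg i)))) ?_
  simp only [mul_one]
  exact le_trans (le_of_eq rfl) (le_totalDegree hm)

lemma deg_affmap_le (r s t r' s' t' : ℝ) (f : MvPolynomial (Fin 2) ℝ) :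
    (affmap r s t r' s' t' f).totalDegree ≤ f.totalDegree := by
  apply deg_aeval_le
  intro i
  fin_cases i <;>
  · refine le_trans (totalDegree_add _ _) ?_
    simp only [max_le_iff]
    constructor
    · refine le_trans (totalDegree_add _ _) ?_
      simp only [max_le_iff]
      refine ⟨by simp, ?_⟩
      refine le_trans (totalDegree_mul _ _) ?_
      simp [totalDegree_X]
    · refine le_trans (totalDegree_mul _ _) ?_
      simp [totalDegree_X]

section phpsi
variable (a b c p₁ p₂ : ℝ)

noncomputable def phm : MvPolynomial (Fin 2) ℝ →ₐ[ℝ] MvPolynomial (Fin 2) ℝ :=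
  affmap p₁ b a p₂ (-a) b

noncomputable def psm : MvPolynomial (Fin 2) ℝ →ₐ[ℝ] MvPolynomial (Fin 2) ℝ :=
  affmap ((-b * p₁ + a * p₂) / (a ^ 2 + b ^ 2)) (b / (a ^ 2 + b ^ 2)) (-a / (a ^ 2 + b ^ 2))
    ((-a * p₁ - b * p₂) / (a ^ 2 + b ^ 2)) (a / (a ^ 2 + b ^ 2)) (b / (a ^ 2 + b ^ 2))

lemma psm_phm (hab : (a, b) ≠ ((0 : ℝ), (0 : ℝ))) (f : MvPolynomial (Fin 2) ℝ) :
    psm a b p₁ p₂ (phm a b p₁ p₂ f) = f := by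
  have he := (e_pos a b hab).ne'
  apply MvPolynomial.funext
  intro v
  rw [psm, eval_affmap, phm, eval_affmap]
  have hfun : (![p₁ + b * (![(-b * p₁ + a * p₂) / (a ^ 2 + b ^ 2) + b / (a ^ 2 + b ^ 2) * v 0 +
        -a / (a ^ 2 + b ^ 2) * v 1, (-a * p₁ - b * p₂) / (a ^ 2 + b ^ 2) +
        a / (a ^ 2 + b ^ 2) * v 0 + b / (a ^ 2 + b ^ 2) * v 1] : Fin 2 → ℝ) 0 +
        a * (![(-b * p₁ + a * p₂) / (a ^ 2 + b ^ 2) + b / (a ^ 2 + b ^ 2) * v 0 +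
        -a / (a ^ 2 + b ^ 2) * v 1, (-a * p₁ - b * p₂) / (a ^ 2 + b ^ 2) +
        a / (a ^ 2 + b ^ 2) * v 0 + b / (a ^ 2 + b ^ 2) * v 1] : Fin 2 → ℝ) 1,
        p₂ + -a * (![(-b * p₁ + a * p₂) / (a ^ 2 + b ^ 2) + b / (a ^ 2 + b ^ 2) * v 0 +
        -a / (a ^ 2 + b ^ 2) * v 1, (-a * p₁ - b * p₂) / (a ^ 2 + b ^ 2) +
        a / (a ^ 2 + b ^ 2) * v 0 + b / (a ^ 2 + b ^ 2) * v 1] : Fin 2 → ℝ) 0 +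
        b * (![(-b * p₁ + a * p₂) / (a ^ 2 + b ^ 2) + b / (a ^ 2 + b ^ 2) * v 0 +
        -a / (a ^ 2 + b ^ 2) * v 1, (-a * p₁ - b * p₂) / (a ^ 2 + b ^ 2) +
        a / (a ^ 2 + b ^ 2) * v 0 + b / (a ^ 2 + b ^ 2) * v 1] : Fin 2 → ℝ) 1] : Fin 2 → ℝ)
        = v := by
    funext i
    fin_cases i <;>
    · simp only [Fin.zero_eta, Fin.mk_one, Matrix.cons_val_zero, Matrix.cons_val_one, Matrix.head_cons, Fin.isValue]
      field_simp
      ring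
  rw [hfun]
end phpsi

lemma eval_lform (a b c : ℝ) (w : Fin 2 → ℝ) :
    eval w (lform a b c) = a * w 0 + b * w 1 + c := by
  simp [lform]


lemma phm_lform (a b c p₁ p₂ : ℝ) (hp : a * p₁ + b * p₂ + c = 0) :
    phm a b p₁ p₂ (lform a b c) = C (a ^ 2 + b ^ 2) * X 1 := by
  apply MvPolynomial.funext
  intro v
  rw [phm, eval_affmap, eval_lform]
  simp only [Matrix.cons_val_zero, Matrix.cons_val_one, Matrix.head_cons, map_mul, eval_C, eval_X]
  linear_combination hp

lemma deg_C_mul (e : ℝ) (he : e ≠ 0) (p : MvPolynomial (Fin 2) ℝ) :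
    (C e * p).totalDegree = p.totalDegree := by
  rw [C_mul', totalDegree, totalDegree, MvPolynomial.support_smul_eq he]

lemma deg_X1_mul (k : MvPolynomial (Fin 2) ℝ) (hk : k ≠ 0) :
    (X 1 * k).totalDegree = k.totalDegree + 1 := by
  have hsupp := support_X_mul 1 k
  rw [totalDegree, hsupp, Finset.sup_map]
  have hfun : ((fun s : Fin 2 →₀ ℕ => s.sum fun _ e => e) ∘
      (addLeftEmbedding (Finsupp.single 1 1))) = fun m : Fin 2 →₀ ℕ =>
      (m.sum fun _ e => e) + 1 := by
    funext m
    simp only [Function.comp_apply, addLeftEmbedding_apply]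
    rw [Finsupp.sum_add_index (by intros; rfl) (by intros; rfl)]
    simp [Finsupp.sum_single_index, add_comm]
  rw [hfun]
  obtain ⟨m₀, hm₀, hsup⟩ := k.support.exists_mem_eq_sup
    (Finset.nonempty_iff_ne_empty.mpr (mt MvPolynomial.support_eq_empty.mp hk)) (fun m : Fin 2 →₀ ℕ => m.sum fun _ e => e)
  apply le_antisymm
  · refine Finset.sup_le fun m hm => ?_
    have := le_totalDegree hm
    omega
  · have h2 := Finset.le_sup (f := fun m : Fin 2 →₀ ℕ => (m.sum fun _ e => e) + 1) hm₀
    rw [totalDegree, hsup]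
    exact h2


lemma X1_dvd_sub (T : MvPolynomial (Fin 2) ℝ) :
    X 1 ∣ (T - aeval ![X 0, (0 : MvPolynomial (Fin 2) ℝ)] T) := by
  induction T using MvPolynomial.induction_on with
  | C a => simp [MvPolynomial.algebraMap_eq]
  | add p q hp hq =>
      have h2 : (p + q) - aeval ![X 0, (0 : MvPolynomial (Fin 2) ℝ)] (p + q)
          = (p - aeval ![X 0, 0] p) + (q - aeval ![X 0, 0] q) := by
        rw [map_add]; ring
      rw [h2]; exact dvd_add hp hq
  | mul_X p n hp =>
      rw [map_mul, aeval_X]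
      fin_cases n <;> simp only [Fin.zero_eta, Fin.mk_one, Fin.isValue]
      · have h2 : p * X 0 - (aeval ![X 0, (0 : MvPolynomial (Fin 2) ℝ)] p) *
            (![X 0, (0 : MvPolynomial (Fin 2) ℝ)] 0)
            = (p - aeval ![X 0, 0] p) * X 0 := by
          simp only [Matrix.cons_val_zero]; ring
        rw [h2]
        exact hp.mul_right _
      · have h2 : p * X 1 - (aeval ![X 0, (0 : MvPolynomial (Fin 2) ℝ)] p) *
            (![X 0, (0 : MvPolynomial (Fin 2) ℝ)] 1) = p * X 1 := by
          simp only [Matrix.cons_val_one, Matrix.head_cons, Matrix.cons_val_zero]; ring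
        rw [h2]
        exact Dvd.intro_left p rfl

lemma deg_phm (a b p₁ p₂ : ℝ) (hab : (a, b) ≠ ((0 : ℝ), (0 : ℝ)))
    (h : MvPolynomial (Fin 2) ℝ) :
    (phm a b p₁ p₂ h).totalDegree = h.totalDegree := by
  apply le_antisymm (deg_affmap_le _ _ _ _ _ _ h)
  calc h.totalDegree = (psm a b p₁ p₂ (phm a b p₁ p₂ h)).totalDegree := by
        rw [psm_phm a b p₁ p₂ hab]
    _ ≤ (phm a b p₁ p₂ h).totalDegree := deg_affmap_le _ _ _ _ _ _ _

lemma deg_lform_mul (a b c : ℝ) (hab : (a, b) ≠ ((0 : ℝ), (0 : ℝ)))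
    (h : MvPolynomial (Fin 2) ℝ) (hh : h ≠ 0) :
    (lform a b c * h).totalDegree = h.totalDegree + 1 := by
  have he := (e_pos a b hab).ne'
  obtain ⟨p, hp⟩ := line_point a b c hab
  have hp' : a * p.1 + b * p.2 + c = 0 := hp
  have hfh : phm a b p.1 p.2 h ≠ 0 := fun h0 => hh (by
    rw [← psm_phm a b p.1 p.2 hab h, h0, map_zero])
  have key : phm a b p.1 p.2 (lform a b c * h)
      = C (a ^ 2 + b ^ 2) * (X 1 * phm a b p.1 p.2 h) := by
    rw [map_mul, phm_lform a b c p.1 p.2 hp']; ring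
  calc (lform a b c * h).totalDegree
      = (phm a b p.1 p.2 (lform a b c * h)).totalDegree := (deg_phm a b p.1 p.2 hab _).symm
    _ = (X 1 * phm a b p.1 p.2 h).totalDegree := by rw [key, deg_C_mul _ he]
    _ = (phm a b p.1 p.2 h).totalDegree + 1 := deg_X1_mul _ hfh
    _ = h.totalDegree + 1 := by rw [deg_phm a b p.1 p.2 hab]

lemma lform_dvd_of_vanish (a b c : ℝ) (hab : (a, b) ≠ ((0 : ℝ), (0 : ℝ)))
    (h : MvPolynomial (Fin 2) ℝ) (hv : ∀ q ∈ lineSet a b c, pev h q = 0) :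
    lform a b c ∣ h := by
  have he := (e_pos a b hab).ne'
  obtain ⟨p, hp⟩ := line_point a b c hab
  have hp' : a * p.1 + b * p.2 + c = 0 := hp
  have hT0 : aeval ![X 0, (0 : MvPolynomial (Fin 2) ℝ)] (phm a b p.1 p.2 h) = 0 := by
    apply MvPolynomial.funext; intro v
    rw [map_zero, eval_aeval_mv]
    have hfun : (fun i => eval v (![X 0, (0 : MvPolynomial (Fin 2) ℝ)] i))
        = ![v 0, (0 : ℝ)] := by
      funext i; fin_cases i <;> simp
    rw [hfun, phm, eval_affmap]
    have hfun2 : (![p.1 + b * (![v 0, (0:ℝ)]) 0 + a * (![v 0, (0:ℝ)]) 1,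
        p.2 + -a * (![v 0, (0:ℝ)]) 0 + b * (![v 0, (0:ℝ)]) 1] : Fin 2 → ℝ)
        = ![p.1 + b * v 0, p.2 - a * v 0] := by
      funext i; fin_cases i <;> (simp; try ring)
    rw [hfun2]
    have hmem := param_mem a b c p.1 p.2 (v 0) hp'
    have hvq := hv _ hmem
    rw [pev] at hvq
    simpa using hvq
  have hdvd : X 1 ∣ phm a b p.1 p.2 h := by
    have h1 := X1_dvd_sub (phm a b p.1 p.2 h)
    rwa [hT0, sub_zero] at h1
  obtain ⟨S, hS⟩ := hdvd
  have hback : C (a ^ 2 + b ^ 2) * psm a b p.1 p.2 (X 1) = lform a b c := by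
    have h1 := psm_phm a b p.1 p.2 hab (lform a b c)
    rw [phm_lform a b c p.1 p.2 hp', map_mul] at h1
    rw [← h1]
    congr 1
    rw [show (C (a ^ 2 + b ^ 2) : MvPolynomial (Fin 2) ℝ)
        = algebraMap ℝ (MvPolynomial (Fin 2) ℝ) (a ^ 2 + b ^ 2) from rfl,
      AlgHom.commutes]
  refine ⟨C (a ^ 2 + b ^ 2)⁻¹ * psm a b p.1 p.2 S, ?_⟩
  have hh : h = psm a b p.1 p.2 (X 1) * psm a b p.1 p.2 S := by
    rw [← map_mul, ← hS, psm_phm a b p.1 p.2 hab]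
  rw [hh, ← hback]
  have h3 : C (a ^ 2 + b ^ 2) * psm a b p.1 p.2 (X 1) * (C (a ^ 2 + b ^ 2)⁻¹ * psm a b p.1 p.2 S)
      = (C (a ^ 2 + b ^ 2) * C (a ^ 2 + b ^ 2)⁻¹) *
        (psm a b p.1 p.2 (X 1) * psm a b p.1 p.2 S) := by ring
  rw [h3, ← C_mul, mul_inv_cancel₀ he, C_1, one_mul]

section
variable (a b c p₁ p₂ u v : ℝ)
noncomputable def lcomp : MvPolynomial (Fin 2) ℝ →ₐ[ℝ] Polynomial ℝ :=
  aeval ![Polynomial.C p₁ + Polynomial.C u * Polynomial.X,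
          Polynomial.C p₂ + Polynomial.C v * Polynomial.X]

lemma eval_lcomp (t : ℝ) (f : MvPolynomial (Fin 2) ℝ) :
    Polynomial.eval t (lcomp p₁ p₂ u v f) = pev f (p₁ + u * t, p₂ + v * t) := by
  rw [lcomp, eval_aeval_poly, pev]
  have hfun : (fun i => Polynomial.eval t
      (![Polynomial.C p₁ + Polynomial.C u * Polynomial.X,
         Polynomial.C p₂ + Polynomial.C v * Polynomial.X] i))
      = ![(p₁ + u * t, p₂ + v * t).1, (p₁ + u * t, p₂ + v * t).2] := by
    funext i
    fin_cases i <;> simp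
  rw [hfun]

lemma param_inj (hab : (a, b) ≠ ((0 : ℝ), (0 : ℝ))) :
    Function.Injective (fun t : ℝ => (p₁ + b * t, p₂ - a * t)) := by
  intro s t hst
  rw [Prod.ext_iff] at hst
  obtain ⟨h1, h2⟩ := hst
  simp only at h1 h2
  rcases ab_ne a b hab with h | h
  · have : a * s = a * t := by linarith
    exact mul_left_cancel₀ h this
  · have : b * s = b * t := by linarith
    exact mul_left_cancel₀ h this

lemma comp_eq_zero (hab : (a, b) ≠ ((0 : ℝ), (0 : ℝ)))
    (hp : a * p₁ + b * p₂ + c = 0) {h : MvPolynomial (Fin 2) ℝ} {E : Set (ℝ × ℝ)}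
    (hE : E.Finite) (hv : ∀ q ∈ lineSet a b c \ E, pev h q = 0) :
    lcomp p₁ p₂ b (-a) h = 0 := by
  apply Polynomial.eq_zero_of_infinite_isRoot
  have hfin : {t : ℝ | (p₁ + b * t, p₂ - a * t) ∈ E}.Finite := by
    have := Set.Finite.preimage (Set.injOn_of_injective (param_inj a b p₁ p₂ hab)) hE
    exact this
  apply Set.Infinite.mono (s := {t : ℝ | (p₁ + b * t, p₂ - a * t) ∈ E}ᶜ)
  swap
  · exact hfin.infinite_compl
  · intro t ht
    simp only [Set.mem_compl_iff, Set.mem_setOf_eq] at ht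
    have hmem := param_mem a b c p₁ p₂ t hp
    have : Polynomial.eval t (lcomp p₁ p₂ b (-a) h) = pev h (p₁ + b * t, p₂ - a * t) := by
      rw [eval_lcomp]
      congr 2
      ring
    simp only [Set.mem_setOf_eq, Polynomial.IsRoot]
    rw [this]
    exact hv _ ⟨hmem, ht⟩

lemma vanish_of_comp (hab : (a, b) ≠ ((0 : ℝ), (0 : ℝ)))
    (hp : a * p₁ + b * p₂ + c = 0) {h : MvPolynomial (Fin 2) ℝ}
    (hc : lcomp p₁ p₂ b (-a) h = 0) : ∀ q ∈ lineSet a b c, pev h q = 0 := by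
  intro q hq
  obtain ⟨t, rfl⟩ := param_surj a b c p₁ p₂ hab hp hq
  have : Polynomial.eval t (lcomp p₁ p₂ b (-a) h) = pev h (p₁ + b * t, p₂ - a * t) := by
    rw [eval_lcomp]; congr 2; ring
  rw [hc] at this
  simpa using this.symm

lemma vanish_cofinite (hab : (a, b) ≠ ((0 : ℝ), (0 : ℝ))) {h : MvPolynomial (Fin 2) ℝ}
    {E : Set (ℝ × ℝ)} (hE : E.Finite)
    (hv : ∀ q ∈ lineSet a b c \ E, pev h q = 0) : ∀ q ∈ lineSet a b c, pev h q = 0 := by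
  obtain ⟨p, hp⟩ := line_point a b c hab
  exact vanish_of_comp a b c p.1 p.2 hab hp (comp_eq_zero a b c p.1 p.2 hab hp hE hv)
end


lemma lform_prime (a b c : ℝ) (hab : (a, b) ≠ ((0 : ℝ), (0 : ℝ))) :
    Prime (lform a b c) := by
  have he := (e_pos a b hab).ne'
  obtain ⟨p, hp⟩ := line_point a b c hab
  have hp' : a * p.1 + b * p.2 + c = 0 := hp
  refine ⟨?_, ?_, ?_⟩
  · intro h0
    have h1 : pev (lform a b c) (p.1 + a, p.2 + b) = 0 := by rw [h0]; simp [pev]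
    rw [pev_lform] at h1
    simp only at h1
    apply he
    linear_combination h1 - hp'
  · intro hu
    obtain ⟨w, hw⟩ := hu.exists_right_inv
    have h1 : pev (lform a b c * w) p = pev 1 p := by rw [hw]
    rw [pev, pev, map_mul, map_one] at h1
    have h2 : eval ![p.1, p.2] (lform a b c) = 0 := by
      have := pev_lform a b c p
      rw [pev] at this
      rw [this]; exact hp'
    rw [h2, zero_mul] at h1
    exact zero_ne_one h1
  · intro f g hfg
    obtain ⟨w, hw⟩ := hfg
    have hvan : ∀ q ∈ lineSet a b c, pev (f * g) q = 0 := by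
      intro q hq
      have hq' : a * q.1 + b * q.2 + c = 0 := hq
      rw [hw, pev, map_mul]
      have : eval ![q.1, q.2] (lform a b c) = 0 := by
        have := pev_lform a b c q
        rw [pev] at this
        rw [this]; exact hq'
      rw [this, zero_mul]
    have hcomp : lcomp p.1 p.2 b (-a) (f * g) = 0 :=
      comp_eq_zero a b c p.1 p.2 hab hp' (Set.finite_empty)
        (fun q hq => hvan q hq.1)
    rw [map_mul] at hcomp
    rcases mul_eq_zero.mp hcomp with h0 | h0
    · exact Or.inl (lform_dvd_of_vanish a b c hab f
        (vanish_of_comp a b c p.1 p.2 hab hp' h0))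
    · exact Or.inr (lform_dvd_of_vanish a b c hab g
        (vanish_of_comp a b c p.1 p.2 hab hp' h0))

lemma card_le_deg (S : Finset (Set (ℝ × ℝ))) :
    ∀ h : MvPolynomial (Fin 2) ℝ, h ≠ 0 →
    (∀ L ∈ S, ∃ a b c : ℝ, (a, b) ≠ ((0 : ℝ), (0 : ℝ)) ∧ L = lineSet a b c) →
    (∀ L ∈ S, ∀ q ∈ L, pev h q = 0) → S.card ≤ h.totalDegree := by
  classical
  induction S using Finset.induction_on with
  | empty => intro h _ _ _; simp
  | @insert L S₀ hL ih =>
    intro h hh hlines hvan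
    obtain ⟨a, b, c, hab, hLeq⟩ := hlines L (Finset.mem_insert_self L S₀)
    have hvL : ∀ q ∈ lineSet a b c, pev h q = 0 := by
      rw [← hLeq]; exact hvan L (Finset.mem_insert_self L S₀)
    obtain ⟨h', rfl⟩ := lform_dvd_of_vanish a b c hab h hvL
    have hh' : h' ≠ 0 := fun h0 => hh (by rw [h0, mul_zero])
    have hvan' : ∀ L' ∈ S₀, ∀ q ∈ L', pev h' q = 0 := by
      intro L' hL' q hq
      obtain ⟨a', b', c', hab', hLeq'⟩ := hlines L' (Finset.mem_insert_of_mem hL')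
      have hne : L' ≠ L := fun h0 => hL (h0 ▸ hL')
      have hnes : lineSet a' b' c' ≠ lineSet a b c := by
        rw [← hLeq, ← hLeq']; exact hne
      have hsub : Set.Subsingleton (lineSet a' b' c' ∩ lineSet a b c) :=
        line_inter_sub a' b' c' a b c hab' hab hnes
      have hEfin : (lineSet a' b' c' ∩ lineSet a b c).Finite := hsub.finite
      have hco : ∀ r ∈ lineSet a' b' c' \ (lineSet a' b' c' ∩ lineSet a b c),
          pev h' r = 0 := by
        intro r hr
        obtain ⟨hr1, hr2⟩ := hr
        have hrL : r ∉ lineSet a b c := fun h0 => hr2 ⟨hr1, h0⟩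
        have hvr : pev (lform a b c * h') r = 0 := by
          rw [← hLeq'] at hr1
          exact hvan L' (Finset.mem_insert_of_mem hL') r hr1
        rw [pev, map_mul] at hvr
        have hl0 : eval ![r.1, r.2] (lform a b c) ≠ 0 := by
          have h1 := pev_lform a b c r
          rw [pev] at h1
          rw [h1]
          exact hrL
        rcases mul_eq_zero.mp hvr with h0 | h0
        · exact absurd h0 hl0
        · rw [pev]; exact h0
      have := vanish_cofinite a' b' c' hab' hEfin hco
      rw [← hLeq'] at this
      exact this q hq
    have hcard := ih h' hh' (fun L' hL' => hlines L' (Finset.mem_insert_of_mem hL')) hvan'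
    rw [Finset.card_insert_of_notMem hL, deg_lform_mul a b c hab h' hh']
    omega



lemma parlines_symm {L L' : Set (ℝ × ℝ)} (h : ParLines L L') : ParLines L' L := by
  rcases h with h | h
  · exact Or.inl h.symm
  · right; rw [Set.inter_comm]; exact h

lemma C_ne (x : ℝ) (hx : x ≠ 0) : (MvPolynomial.C x : MvPolynomial (Fin 2) ℝ) ≠ 0 := by
  simpa using hx

lemma exists_mArr (A : Finset (Set (ℝ × ℝ))) :
    ∃ q : ℝ × ℝ, numThrough A q = mArr A := by
  classical
  have h1 : (Set.range (numThrough A)).Nonempty := ⟨_, ⟨(0, 0), rfl⟩⟩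
  have h2 : BddAbove (Set.range (numThrough A)) := by
    refine ⟨A.card, ?_⟩
    rintro _ ⟨q, rfl⟩
    unfold numThrough
    apply Finset.card_filter_le
  obtain ⟨q, hq⟩ := Nat.sSup_mem h1 h2
  exact ⟨q, hq⟩

lemma mArr_le_card (A : Finset (Set (ℝ × ℝ))) : mArr A ≤ A.card := by
  classical
  obtain ⟨q, hq⟩ := exists_mArr A
  rw [← hq]
  unfold numThrough
  apply Finset.card_filter_le

lemma pArr_bdd (A : Finset (Set (ℝ × ℝ))) :
    BddAbove {k : ℕ | ∃ S : Finset (Set (ℝ × ℝ)), S ⊆ A ∧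
      (∀ L ∈ S, ∀ L' ∈ S, ParLines L L') ∧ S.card = k} := by
  refine ⟨A.card, ?_⟩
  rintro k ⟨S, hS, _, rfl⟩
  exact Finset.card_le_card hS

lemma pArr_spec (A : Finset (Set (ℝ × ℝ))) :
    ∃ S : Finset (Set (ℝ × ℝ)), S ⊆ A ∧
      (∀ L ∈ S, ∀ L' ∈ S, ParLines L L') ∧ S.card = pArr A := by
  have h1 : {k : ℕ | ∃ S : Finset (Set (ℝ × ℝ)), S ⊆ A ∧
      (∀ L ∈ S, ∀ L' ∈ S, ParLines L L') ∧ S.card = k}.Nonempty :=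
    ⟨0, ∅, Finset.empty_subset _, by simp, by simp⟩
  have := Nat.sSup_mem h1 (pArr_bdd A)
  exact this

lemma le_pArr (A S : Finset (Set (ℝ × ℝ))) (hS : S ⊆ A)
    (hpar : ∀ L ∈ S, ∀ L' ∈ S, ParLines L L') : S.card ≤ pArr A :=
  le_csSup (pArr_bdd A) ⟨S, hS, hpar, rfl⟩


/-- **Corollary.** Let `A` be a line arrangement with `n` lines and
`ν(A) = min (max (m(A) - 1) (p(A))) (min (n - m(A) + 1) (n - p(A)))`.
If `0 < d < ν(A)` then there is no polynomial vector field of degree exactly `d`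
fixing every line of `A`, i.e. `D_d(A) = ∅`. -/
theorem no_fixing_field_below_nu
    (A : Finset (Set (ℝ × ℝ))) (hA : ∀ L ∈ A, IsLine L) (d : ℕ)
    (hd0 : 0 < d)
    (hd : d < min (max (mArr A - 1) (pArr A))
            (min (A.card - mArr A + 1) (A.card - pArr A))) :
    ¬∃ P Q : MvPolynomial (Fin 2) ℝ,
        max P.totalDegree Q.totalDegree = d ∧ ∀ L ∈ A, InvLine P Q L := by
  classical
  rintro ⟨P, Q, hdeg, hinv⟩
  rw [lt_min_iff] at hd
  obtain ⟨hd1, hd2⟩ := hd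
  rw [lt_min_iff] at hd2
  obtain ⟨hdm, hdp⟩ := hd2
  have hdP : P.totalDegree ≤ d := hdeg ▸ le_max_left _ _
  have hdQ : Q.totalDegree ≤ d := hdeg ▸ le_max_right _ _
  rw [lt_max_iff] at hd1
  rcases hd1 with hcase | hcase
  · -- concurrent case: d < mArr A - 1
    have hm2 : d + 2 ≤ mArr A := by omega
    obtain ⟨q, hq⟩ := exists_mArr A
    set Sq := A.filter (fun L => q ∈ L) with hSq
    have hSqcard : Sq.card = mArr A := hq
    set D := (MvPolynomial.X 0 - MvPolynomial.C q.1) * Q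
        - (MvPolynomial.X 1 - MvPolynomial.C q.2) * P with hD
    have hdegu : (MvPolynomial.X 0 - MvPolynomial.C q.1 :
        MvPolynomial (Fin 2) ℝ).totalDegree ≤ 1 := by
      rw [sub_eq_add_neg]
      refine le_trans (MvPolynomial.totalDegree_add _ _) ?_
      simp [MvPolynomial.totalDegree_neg, MvPolynomial.totalDegree_X]
    have hdegv : (MvPolynomial.X 1 - MvPolynomial.C q.2 :
        MvPolynomial (Fin 2) ℝ).totalDegree ≤ 1 := by
      rw [sub_eq_add_neg]
      refine le_trans (MvPolynomial.totalDegree_add _ _) ?_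
      simp [MvPolynomial.totalDegree_neg, MvPolynomial.totalDegree_X]
    have hDdeg : D.totalDegree ≤ d + 1 := by
      rw [hD, sub_eq_add_neg]
      refine le_trans (MvPolynomial.totalDegree_add _ _) ?_
      rw [max_le_iff]
      constructor
      · refine le_trans (MvPolynomial.totalDegree_mul _ _) ?_
        omega
      · rw [MvPolynomial.totalDegree_neg]
        refine le_trans (MvPolynomial.totalDegree_mul _ _) ?_
        omega
    have hDvan : ∀ L ∈ Sq, ∀ r ∈ L, pev D r = 0 := by
      intro L hL r hr
      obtain ⟨hLA, hqL⟩ := Finset.mem_filter.mp hL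
      obtain ⟨a, b, c, hab, hLeq, hinvL⟩ := hinv L hLA
      have hq' : a * q.1 + b * q.2 + c = 0 := by
        rw [hLeq] at hqL; exact hqL
      have hinv' := hinvL r hr
      rw [hLeq] at hr
      obtain ⟨t, rfl⟩ := param_surj a b c q.1 q.2 hab hq' hr
      simp only [pev, hD, map_sub, map_mul, map_add, MvPolynomial.eval_X,
        MvPolynomial.eval_C, Matrix.cons_val_zero, Matrix.cons_val_one,
        Matrix.head_cons] at hinv' ⊢
      linear_combination t * hinv'
    have hD0 : D = 0 := by
      by_contra hne
      have := card_le_deg Sq D hne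
        (fun L hL => hA L (Finset.mem_filter.mp hL).1)
        hDvan
      omega
    have huv : (MvPolynomial.X 0 - MvPolynomial.C q.1) * Q
        = (MvPolynomial.X 1 - MvPolynomial.C q.2) * P := by
      have := sub_eq_zero.mp (hD ▸ hD0)
      exact this
    have hu_lform : lform 1 0 (-q.1) = MvPolynomial.X 0 - MvPolynomial.C q.1 := by
      rw [lform]
      simp only [map_one, map_zero, one_mul, zero_mul, add_zero, map_neg]
      ring
    have hab1 : ((1 : ℝ), (0 : ℝ)) ≠ ((0 : ℝ), (0 : ℝ)) := by simp
    have hprime : Prime (MvPolynomial.X 0 - MvPolynomial.C q.1 :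
        MvPolynomial (Fin 2) ℝ) := hu_lform ▸ lform_prime 1 0 (-q.1) hab1
    have hndvd : ¬ (MvPolynomial.X 0 - MvPolynomial.C q.1) ∣
        (MvPolynomial.X 1 - MvPolynomial.C q.2 : MvPolynomial (Fin 2) ℝ) := by
      rintro ⟨w, hw⟩
      have hcon := congrArg (MvPolynomial.eval ![q.1, q.2 + 1]) hw
      simp only [map_sub, map_mul, MvPolynomial.eval_X, MvPolynomial.eval_C,
        Matrix.cons_val_zero, Matrix.cons_val_one, Matrix.head_cons, sub_self,
        zero_mul] at hcon
      norm_num at hcon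
    have hdvdP : (MvPolynomial.X 0 - MvPolynomial.C q.1) ∣ P := by
      rcases hprime.2.2 _ _ ⟨Q, huv.symm⟩ with h | h
      · exact absurd h hndvd
      · exact h
    obtain ⟨g, hP⟩ := hdvdP
    have hQ : Q = (MvPolynomial.X 1 - MvPolynomial.C q.2) * g := by
      apply mul_left_cancel₀ hprime.1
      rw [huv, hP]; ring
    by_cases hg : g = 0
    · rw [hg, mul_zero] at hP hQ
      rw [hP, hQ] at hdeg
      simp at hdeg
      omega
    · have hdegP : P.totalDegree = g.totalDegree + 1 := by
        rw [hP, ← hu_lform, deg_lform_mul 1 0 (-q.1) hab1 g hg]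
      set Tq := A.filter (fun L => ¬ q ∈ L) with hTq
      have hTcard : Sq.card + Tq.card = A.card :=
        Finset.card_filter_add_card_filter_not (p := fun L => q ∈ L)
      have hmle := mArr_le_card A
      have hvanT : ∀ L ∈ Tq, ∀ r ∈ L, pev g r = 0 := by
        intro L hL r hr
        obtain ⟨hLA, hqnL⟩ := Finset.mem_filter.mp hL
        obtain ⟨a, b, c, hab, hLeq, hinvL⟩ := hinv L hLA
        have hqs : a * q.1 + b * q.2 + c ≠ 0 := by
          intro h0
          exact hqnL (by rw [hLeq]; exact h0)
        have hr' : a * r.1 + b * r.2 + c = 0 := by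
          rw [hLeq] at hr; exact hr
        have hinv' := hinvL r hr
        have h1 : a * pev P r + b * pev Q r
            = (a * (r.1 - q.1) + b * (r.2 - q.2)) * pev g r := by
          rw [hP, hQ, pev, pev, pev]
          simp only [map_sub, map_mul, MvPolynomial.eval_X, MvPolynomial.eval_C,
            Matrix.cons_val_zero, Matrix.cons_val_one, Matrix.head_cons]
          ring
        rw [h1] at hinv'
        rcases mul_eq_zero.mp hinv' with h0 | h0
        · exfalso
          apply hqs
          linear_combination hr' - h0
        · exact h0
      have hTg := card_le_deg Tq g hg
        (fun L hL => hA L (Finset.mem_filter.mp hL).1) hvanT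
      omega
  · -- parallel case : d < pArr A
    obtain ⟨S, hSsub, hSpar, hScard⟩ := pArr_spec A
    have hSne : S.Nonempty := by
      rw [← Finset.card_pos]; omega
    obtain ⟨L₀, hL₀⟩ := hSne
    obtain ⟨a, b, c, hab, hL0eq, hinvL₀⟩ := hinv L₀ (hSsub hL₀)
    set R := MvPolynomial.C a * P + MvPolynomial.C b * Q with hR
    have hRdeg : R.totalDegree ≤ d := by
      rw [hR]
      refine le_trans (MvPolynomial.totalDegree_add _ _) ?_
      rw [max_le_iff]
      constructor <;>
      · refine le_trans (MvPolynomial.totalDegree_mul _ _) ?_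
        simp only [MvPolynomial.totalDegree_C, zero_add]
        omega
    have hvanR : ∀ L ∈ S, ∀ r ∈ L, pev R r = 0 := by
      intro L hL r hr
      obtain ⟨a', b', c', hab', hLeq', hinvL⟩ := hinv L (hSsub hL)
      have hpar : ParLines (lineSet a b c) (lineSet a' b' c') := by
        rw [← hL0eq, ← hLeq']; exact hSpar L₀ hL₀ L hL
      have hdet := det_of_par a b c a' b' c' hab hab' hpar
      obtain ⟨l, hl, ha', hb'⟩ := prop_of_det a b a' b' hab hab' hdet
      have hinv' := hinvL r hr
      rw [ha', hb'] at hinv'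
      have h2 : l * (a * pev P r + b * pev Q r) = 0 := by linear_combination hinv'
      have h3 : a * pev P r + b * pev Q r = 0 := by
        rcases mul_eq_zero.mp h2 with h0 | h0
        · exact absurd h0 hl
        · exact h0
      rw [hR, pev]
      simp only [map_add, map_mul, MvPolynomial.eval_C]
      rw [pev, pev] at h3
      exact h3
    have hR0 : R = 0 := by
      by_contra hne
      have := card_le_deg S R hne (fun L hL => hA L (hSsub hL)) hvanR
      omega
    obtain ⟨g, hP, hQ, hdegg⟩ : ∃ g : MvPolynomial (Fin 2) ℝ,
        P = MvPolynomial.C b * g ∧ Q = -(MvPolynomial.C a * g) ∧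
        g.totalDegree ≤ d := by
      by_cases hb : b = 0
      · have ha : a ≠ 0 := by
          rcases ab_ne a b hab with h | h
          · exact h
          · exact absurd hb h
        have hP0 : P = 0 := by
          rw [hR, hb] at hR0
          simp only [map_zero, zero_mul, add_zero] at hR0
          rcases mul_eq_zero.mp hR0 with h0 | h0
          · exact absurd h0 (C_ne a ha)
          · exact h0
        refine ⟨-(MvPolynomial.C a⁻¹ * Q), ?_, ?_, ?_⟩
        · rw [hP0, hb]; simp
        · rw [mul_neg, neg_neg, ← mul_assoc, ← map_mul,
            mul_inv_cancel₀ ha, MvPolynomial.C_1, one_mul]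
        · rw [MvPolynomial.totalDegree_neg]
          refine le_trans (MvPolynomial.totalDegree_mul _ _) ?_
          simp only [MvPolynomial.totalDegree_C, zero_add]
          omega
      · refine ⟨MvPolynomial.C b⁻¹ * P, ?_, ?_, ?_⟩
        · rw [← mul_assoc, ← map_mul, mul_inv_cancel₀ hb, MvPolynomial.C_1, one_mul]
        · apply mul_left_cancel₀ (C_ne b hb)
          have h4 : MvPolynomial.C b * Q = -(MvPolynomial.C a * P) := by
            have hR0' : MvPolynomial.C a * P + MvPolynomial.C b * Q = 0 := by
              rw [← hR]; exact hR0
            linear_combination hR0'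
          rw [h4]
          calc -(MvPolynomial.C a * P)
              = -((MvPolynomial.C b * MvPolynomial.C b⁻¹) * (MvPolynomial.C a * P)) := by
                rw [← map_mul, mul_inv_cancel₀ hb, MvPolynomial.C_1, one_mul]
            _ = MvPolynomial.C b * -(MvPolynomial.C a * (MvPolynomial.C b⁻¹ * P)) := by
                ring
        · refine le_trans (MvPolynomial.totalDegree_mul _ _) ?_
          simp only [MvPolynomial.totalDegree_C, zero_add]
          omega
    by_cases hg0 : g = 0
    · rw [hg0, mul_zero] at hP
      rw [hg0, mul_zero, neg_zero] at hQ
      rw [hP, hQ] at hdeg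
      simp at hdeg
      omega
    · set T := A \ S with hT
      have hTcard : T.card = A.card - S.card := Finset.card_sdiff_of_subset hSsub
      have hvanT : ∀ L ∈ T, ∀ r ∈ L, pev g r = 0 := by
        intro L hL r hr
        obtain ⟨hLA, hLnS⟩ := Finset.mem_sdiff.mp hL
        obtain ⟨a', b', c', hab', hLeq', hinvL⟩ := hinv L hLA
        have hdet' : a * b' - a' * b ≠ 0 := by
          intro hdet0
          obtain ⟨l1, hl1, ha', hb'⟩ := prop_of_det a b a' b' hab hab' hdet0
          have hparL : ∀ L'' ∈ S, ParLines L L'' := by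
            intro L'' hL''
            obtain ⟨a'', b'', c'', hab'', hLeq'', _⟩ := hinv L'' (hSsub hL'')
            have hpar0 : ParLines (lineSet a b c) (lineSet a'' b'' c'') := by
              rw [← hL0eq, ← hLeq'']; exact hSpar L₀ hL₀ L'' hL''
            have hdet2 := det_of_par a b c a'' b'' c'' hab hab'' hpar0
            obtain ⟨l2, hl2, ha'', hb''⟩ := prop_of_det a b a'' b'' hab hab'' hdet2
            have hdet3 : a' * b'' - a'' * b' = 0 := by
              rw [ha', hb', ha'', hb'']; ring
            rw [hLeq', hLeq'']
            exact par_of_det a' b' c' a'' b'' c'' hab' hab'' hdet3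
          have hparins : ∀ L1 ∈ insert L S, ∀ L2 ∈ insert L S, ParLines L1 L2 := by
            intro L1 h1 L2 h2
            rcases Finset.mem_insert.mp h1 with h1' | h1'
            · rcases Finset.mem_insert.mp h2 with h2' | h2'
              · rw [h1', h2']; exact Or.inl rfl
              · rw [h1']; exact hparL L2 h2'
            · rcases Finset.mem_insert.mp h2 with h2' | h2'
              · rw [h2']; exact parlines_symm (hparL L1 h1')
              · exact hSpar L1 h1' L2 h2'
          have hsub2 : insert L S ⊆ A := Finset.insert_subset hLA hSsub
          have hle := le_pArr A (insert L S) hsub2 hparins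
          rw [Finset.card_insert_of_notMem hLnS] at hle
          omega
        have hinv' := hinvL r hr
        have h1 : a' * pev P r + b' * pev Q r = -(a * b' - a' * b) * pev g r := by
          rw [hP, hQ, pev, pev, pev]
          simp only [map_add, map_mul, map_neg, MvPolynomial.eval_C]
          ring
        rw [h1] at hinv'
        rcases mul_eq_zero.mp hinv' with h0 | h0
        · exact absurd (neg_eq_zero.mp h0) hdet'
        · exact h0
      have hTg := card_le_deg T g hg0
        (fun L hL => hA L (Finset.mem_sdiff.mp hL).1) hvanT
      omega
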